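/- arXiv:2309.13517 — 2 statements merged into one kernel-verified Lean document; each statement's English description precedes it below -/
import Mathlib

section
/- Any rectangle R ⊆ ({0,1}^n)^k satisfying |R ∩ D_0| ≥ 2^{-n/k} · |D_0| must intersect D_*. Equivalently, every 0-monochromatic rectangle R for k-party unique disjointness satisfies |R ∩ D_0| < 2^{-n/k} · (k+1)^n. -/
/-- 'no' instances of k-party unique disjointness on n coordinates. -/
def D0 (n k : ℕ) : Set (Fin k → Fin n → Bool) :=
  {x | ∀ i : Fin n, (∑ j, if x j i then 1 else 0) ≤ 1}

/-- 'yes' instances of k-party unique disjointness on n coordinates. -/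
def Dstar (n k : ℕ) : Set (Fin k → Fin n → Bool) :=
  {x | ∃ ℓ : Fin n, (∀ j, x j ℓ = true) ∧
    ∀ i ≠ ℓ, (∑ j, if x j i then 1 else 0) ≤ 1}

/-- Combinatorial rectangle X_1 × ... × X_k. -/
def Rect {n k : ℕ} (X : Fin k → Set (Fin n → Bool)) : Set (Fin k → Fin n → Bool) :=
  {x | ∀ j, x j ∈ X j}

open Set

section Aux
variable {n k : ℕ}

lemma mem_rect_update {X : Fin k → Set (Fin n → Bool)} {j : Fin k}
    {S : Set (Fin n → Bool)} {z : Fin k → Fin n → Bool} :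
    z ∈ Rect (Function.update X j S) ↔ z j ∈ S ∧ ∀ j' ≠ j, z j' ∈ X j' := by
  constructor
  · intro h
    refine ⟨by simpa using h j, fun j' hj' => by simpa [Function.update_of_ne hj'] using h j'⟩
  · rintro ⟨h1, h2⟩ j'
    rcases eq_or_ne j' j with rfl | hj'
    · simpa using h1
    · simpa [Function.update_of_ne hj'] using h2 j' hj'

lemma rect_update_union (X : Fin k → Set (Fin n → Bool)) (j : Fin k)
    (S T : Set (Fin n → Bool)) :
    Rect (Function.update X j (S ∪ T)) =
      Rect (Function.update X j S) ∪ Rect (Function.update X j T) := by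
  ext z
  simp only [Set.mem_union, mem_rect_update, Set.mem_union]
  tauto

lemma rect_update_inter (X : Fin k → Set (Fin n → Bool)) (j : Fin k)
    (S T : Set (Fin n → Bool)) :
    Rect (Function.update X j (S ∩ T)) =
      Rect (Function.update X j S) ∩ Rect (Function.update X j T) := by
  ext z
  simp only [Set.mem_inter_iff, mem_rect_update, Set.mem_inter_iff]
  tauto

lemma rect_mono {X Y : Fin k → Set (Fin n → Bool)} (h : ∀ j, X j ⊆ Y j) :
    Rect X ⊆ Rect Y := fun z hz j => h j (hz j)

lemma ncard_biUnion_eq {ι α : Type*} [Finite α] (t : Finset ι) (P : ι → Set α)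
    (hdisj : ∀ i ∈ t, ∀ j ∈ t, i ≠ j → Disjoint (P i) (P j)) :
    (⋃ i ∈ t, P i).ncard = ∑ i ∈ t, (P i).ncard := by
  classical
  induction t using Finset.induction_on with
  | empty => simp
  | @insert a s ha ih =>
    rw [Finset.set_biUnion_insert, Finset.sum_insert ha,
      Set.ncard_union_eq ?_ (Set.toFinite _) (Set.toFinite _),
      ih (fun i hi j hj hij => hdisj i (Finset.mem_insert_of_mem hi) j
        (Finset.mem_insert_of_mem hj) hij)]
    exact Set.disjoint_iUnion₂_right.2 fun i hi =>
      hdisj a (Finset.mem_insert_self a s) i (Finset.mem_insert_of_mem hi)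
        (fun h => ha (h ▸ hi))

lemma ncard_biUnion_le {ι α : Type*} [Finite α] (t : Finset ι) (P : ι → Set α) :
    (⋃ i ∈ t, P i).ncard ≤ ∑ i ∈ t, (P i).ncard := by
  classical
  induction t using Finset.induction_on with
  | empty => simp
  | @insert a s ha ih =>
    rw [Finset.set_biUnion_insert, Finset.sum_insert ha]
    exact le_trans (Set.ncard_union_le _ _) (by omega)

lemma sum_ite_le_one {f : Fin k → Bool} {j : Fin k} (h : ∀ j', f j' = true → j' = j) :
    (∑ j', if f j' then 1 else 0) ≤ 1 := by
  calc (∑ j', if f j' then 1 else 0) ≤ ∑ j', if j' = j then 1 else 0 := by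
        refine Finset.sum_le_sum fun j' _ => ?_
        by_cases hf : f j' = true
        · obtain rfl := h j' hf; simp [hf]
        · simp [hf]
    _ = 1 := by simp

lemma eq_of_sum_ite_le_one {f : Fin k → Bool} (h : (∑ j', if f j' then 1 else 0) ≤ 1)
    {j₁ j₂ : Fin k} (h1 : f j₁ = true) (h2 : f j₂ = true) : j₁ = j₂ := by
  by_contra hne
  have : (2:ℕ) ≤ ∑ j', if f j' then 1 else 0 := by
    have hsub : ({j₁, j₂} : Finset (Fin k)) ⊆ Finset.univ := Finset.subset_univ _
    calc (2:ℕ) = ∑ j' ∈ ({j₁, j₂} : Finset (Fin k)), if f j' then 1 else 0 := by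
          rw [Finset.sum_pair hne]; simp [h1, h2]
      _ ≤ ∑ j', if f j' then 1 else 0 :=
          Finset.sum_le_sum_of_subset hsub
  omega

end Aux

section Proj
variable {n k : ℕ}

/-- Restriction of a rectangle's sets by fixing the last coordinate to pattern `s`. -/
def restr (X : Fin k → Set (Fin (n+1) → Bool)) (s : Fin k → Bool) :
    Fin k → Set (Fin n → Bool) :=
  fun j => {y | Fin.snoc y (s j) ∈ X j}

/-- Admissible last-coordinate patterns, indexed by `Option (Fin k)`. -/
def pat (o : Option (Fin k)) : Fin k → Bool := fun j => decide (o = some j)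

lemma pat_sum (o : Option (Fin k)) : (∑ j, if pat o j then 1 else 0) ≤ 1 := by
  cases o with
  | none => simp [pat]
  | some j =>
    apply sum_ite_le_one (j := j)
    intro j' hj'
    simpa [pat, eq_comm] using hj'

lemma pat_injective : Function.Injective (pat (k := k)) := by
  intro o₁ o₂ h
  cases o₁ with
  | none =>
    cases o₂ with
    | none => rfl
    | some j => exact absurd (congrFun h j) (by simp [pat])
  | some j =>
    cases o₂ with
    | none => exact absurd (congrFun h j) (by simp [pat])
    | some j' =>
      have := congrFun h j'
      simp only [pat, Option.some.injEq, decide_eq_decide] at this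
      simp [this.2 trivial]

lemma exists_pat {f : Fin k → Bool} (h : (∑ j', if f j' then 1 else 0) ≤ 1) :
    ∃ o, f = pat o := by
  by_cases he : ∃ j, f j = true
  · obtain ⟨j, hj⟩ := he
    refine ⟨some j, funext fun j' => ?_⟩
    by_cases hf : f j' = true
    · obtain rfl := eq_of_sum_ite_le_one h hj hf
      simp [pat, hf]
    · have hne : ¬ (j = j') := fun e => hf (e ▸ hj)
      simp only [Bool.not_eq_true] at hf
      rw [hf]
      simp [pat, hne]
  · push_neg at he
    refine ⟨none, funext fun j' => ?_⟩
    have := he j'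
    simp only [Bool.not_eq_true] at this
    rw [this]
    simp [pat]
end Proj

section Proj2
variable {n k : ℕ}

lemma mem_D0 {x : Fin k → Fin n → Bool} :
    x ∈ D0 n k ↔ ∀ i : Fin n, (∑ j, if x j i then 1 else 0) ≤ 1 := Iff.rfl

lemma mem_Dstar {x : Fin k → Fin n → Bool} :
    x ∈ Dstar n k ↔ ∃ ℓ : Fin n, (∀ j, x j ℓ = true) ∧
      ∀ i ≠ ℓ, (∑ j, if x j i then 1 else 0) ≤ 1 := Iff.rfl

lemma restr_no_star {X : Fin k → Set (Fin (n+1) → Bool)}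
    (h : Rect X ∩ Dstar (n+1) k = ∅) {s : Fin k → Bool}
    (hs : (∑ j, if s j then 1 else 0) ≤ 1) :
    Rect (restr X s) ∩ Dstar n k = ∅ := by
  rw [Set.eq_empty_iff_forall_notMem]
  rintro y ⟨hyR, hyD⟩
  obtain ⟨ℓ, hℓ1, hℓ2⟩ := mem_Dstar.1 hyD
  have hz : (fun j => Fin.snoc (y j) (s j)) ∈ Rect X ∩ Dstar (n+1) k := by
    refine ⟨fun j => hyR j, mem_Dstar.2 ⟨ℓ.castSucc, fun j => ?_, fun i hi => ?_⟩⟩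
    · simp [Fin.snoc_castSucc, hℓ1 j]
    · rcases Fin.eq_castSucc_or_eq_last i with ⟨i', rfl⟩ | rfl
      · simp only [Fin.snoc_castSucc]
        exact hℓ2 i' (fun e => hi (by rw [e]))
      · simp only [Fin.snoc_last]
        exact hs
  rw [h] at hz
  exact hz

lemma free_no_star {X : Fin k → Set (Fin (n+1) → Bool)}
    (h : Rect X ∩ Dstar (n+1) k = ∅) (j : Fin k) :
    Rect (Function.update (restr X (fun _ => false)) j
      ((restr X (fun _ => false) j) ∪ {y | Fin.snoc y true ∈ X j})) ∩ Dstar n k = ∅ := by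
  rw [Set.eq_empty_iff_forall_notMem]
  rintro y ⟨hyR, hyD⟩
  obtain ⟨ℓ, hℓ1, hℓ2⟩ := mem_Dstar.1 hyD
  obtain ⟨hyj, hyo⟩ := mem_rect_update.1 hyR
  obtain ⟨b, hb⟩ : ∃ b, Fin.snoc (y j) b ∈ X j := by
    rcases hyj with h1 | h1
    · exact ⟨false, h1⟩
    · exact ⟨true, h1⟩
  set s : Fin k → Bool := fun j' => if j' = j then b else false with hsdef
  have hz : (fun j' => Fin.snoc (y j') (s j')) ∈ Rect X ∩ Dstar (n+1) k := by
    refine ⟨fun j' => ?_, mem_Dstar.2 ⟨ℓ.castSucc, fun j' => ?_, fun i hi => ?_⟩⟩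
    · rcases eq_or_ne j' j with rfl | hj'
      · simpa [hsdef] using hb
      · have := hyo j' hj'
        simpa [hsdef, hj', restr] using this
    · simp [Fin.snoc_castSucc, hℓ1 j']
    · rcases Fin.eq_castSucc_or_eq_last i with ⟨i', rfl⟩ | rfl
      · simp only [Fin.snoc_castSucc]
        exact hℓ2 i' (fun e => hi (by rw [e]))
      · simp only [Fin.snoc_last]
        apply sum_ite_le_one (j := j)
        intro j' hj'
        by_contra hne
        simp [hsdef, hne] at hj'
  rw [h] at hz
  exact hz

lemma ones_empty {X : Fin k → Set (Fin (n+1) → Bool)}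
    (h : Rect X ∩ Dstar (n+1) k = ∅) :
    Rect (fun j => {y | Fin.snoc y true ∈ X j}) ∩ D0 n k = ∅ := by
  rw [Set.eq_empty_iff_forall_notMem]
  rintro y ⟨hyR, hyD⟩
  have hz : (fun j => Fin.snoc (y j) true) ∈ Rect X ∩ Dstar (n+1) k := by
    refine ⟨fun j => hyR j, mem_Dstar.2 ⟨Fin.last n, fun j => by simp, fun i hi => ?_⟩⟩
    rcases Fin.eq_castSucc_or_eq_last i with ⟨i', rfl⟩ | rfl
    · simp only [Fin.snoc_castSucc]
      exact mem_D0.1 hyD i'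
    · exact absurd rfl hi
  rw [h] at hz
  exact hz

lemma ncard_piece (X : Fin k → Set (Fin (n+1) → Bool)) (o : Option (Fin k)) :
    ({z | z ∈ Rect X ∩ D0 (n+1) k ∧ ∀ j, z j (Fin.last n) = pat o j}).ncard
      = (Rect (restr X (pat o)) ∩ D0 n k).ncard := by
  classical
  set g : (Fin k → Fin (n+1) → Bool) → (Fin k → Fin n → Bool) :=
    fun z j => Fin.init (z j) with hg
  set P := {z | z ∈ Rect X ∩ D0 (n+1) k ∧ ∀ j, z j (Fin.last n) = pat o j} with hPdef
  have himg : g '' P = Rect (restr X (pat o)) ∩ D0 n k := by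
    apply Set.Subset.antisymm
    · rintro _ ⟨z, ⟨⟨hzR, hz0⟩, hzl⟩, rfl⟩
      refine ⟨fun j => ?_, mem_D0.2 fun i => ?_⟩
      · show Fin.snoc (Fin.init (z j)) (pat o j) ∈ X j
        rw [← hzl j, Fin.snoc_init_self]
        exact hzR j
      · have hi := mem_D0.1 hz0 i.castSucc
        simpa [hg, Fin.init] using hi
    · rintro y ⟨hyR, hy0⟩
      refine ⟨fun j => Fin.snoc (y j) (pat o j),
        ⟨⟨fun j => hyR j, mem_D0.2 fun i => ?_⟩, fun j => by simp⟩, ?_⟩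
      · rcases Fin.eq_castSucc_or_eq_last i with ⟨i', rfl⟩ | rfl
        · simpa [Fin.snoc_castSucc] using mem_D0.1 hy0 i'
        · simpa [Fin.snoc_last] using pat_sum o
      · funext j
        simp [hg, Fin.init_snoc]
  have hinj : Set.InjOn g P := by
    rintro z1 hz1 z2 hz2 he
    funext j
    have h1 := hz1.2 j
    have h2 := hz2.2 j
    have h3 : Fin.init (z1 j) = Fin.init (z2 j) := congrFun he j
    calc z1 j = Fin.snoc (Fin.init (z1 j)) (z1 j (Fin.last n)) := (Fin.snoc_init_self _).symm
      _ = Fin.snoc (Fin.init (z2 j)) (z2 j (Fin.last n)) := by rw [h3, h1, h2]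
      _ = z2 j := Fin.snoc_init_self _
  rw [← himg, Set.ncard_image_of_injOn hinj]

lemma decomp (X : Fin k → Set (Fin (n+1) → Bool)) :
    (Rect X ∩ D0 (n+1) k).ncard
      = ∑ o : Option (Fin k), (Rect (restr X (pat o)) ∩ D0 n k).ncard := by
  classical
  set P : Option (Fin k) → Set (Fin k → Fin (n+1) → Bool) :=
    fun o => {z | z ∈ Rect X ∩ D0 (n+1) k ∧ ∀ j, z j (Fin.last n) = pat o j} with hP
  have hcover : Rect X ∩ D0 (n+1) k = ⋃ o ∈ (Finset.univ : Finset (Option (Fin k))), P o := by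
    apply Set.Subset.antisymm
    · intro z hz
      obtain ⟨o, ho⟩ := exists_pat (f := fun j => z j (Fin.last n)) (mem_D0.1 hz.2 (Fin.last n))
      exact Set.mem_biUnion (Finset.mem_univ o) ⟨hz, fun j => congrFun ho j⟩
    · intro z hz
      simp only [Set.mem_iUnion] at hz
      obtain ⟨o, _, hz2⟩ := hz
      exact hz2.1
  rw [hcover, ncard_biUnion_eq _ _ ?_]
  · exact Finset.sum_congr rfl fun o _ => ncard_piece X o
  · intro o₁ h₁ o₂ h₂ hne
    rw [Set.disjoint_left]
    rintro z ⟨_, hz1⟩ ⟨_, hz2⟩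
    exact hne (pat_injective (funext fun j => (hz1 j).symm.trans (hz2 j)))

end Proj2

lemma key_bound : ∀ (n k : ℕ), 1 ≤ k → ∀ (X : Fin k → Set (Fin n → Bool)),
    Rect X ∩ Dstar n k = ∅ → (Rect X ∩ D0 n k).ncard ≤ k ^ n := by
  intro n
  induction n with
  | zero =>
    intro k hk X _
    have h1 : (Rect X ∩ D0 0 k).ncard ≤ (Set.univ : Set (Fin k → Fin 0 → Bool)).ncard :=
      Set.ncard_le_ncard (Set.subset_univ _) (Set.toFinite _)
    rw [Set.ncard_univ, Nat.card_unique] at h1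
    simpa using h1
  | succ n ih =>
    intro k hk X h
    classical
    set Y : Fin k → Set (Fin n → Bool) := restr X (fun _ => false) with hY
    set S1 : Fin k → Set (Fin n → Bool) := fun j => {y | Fin.snoc y true ∈ X j} with hS1
    set A0 := (Rect Y ∩ D0 n k).ncard with hA0
    set A : Fin k → ℕ := fun j => (Rect (Function.update Y j (S1 j)) ∩ D0 n k).ncard with hA
    set T : Fin k → ℕ := fun j => (Rect (Function.update Y j (Y j ∪ S1 j)) ∩ D0 n k).ncard with hT
    set B : Fin k → ℕ := fun j => (Rect (Function.update Y j (Y j ∩ S1 j)) ∩ D0 n k).ncard with hB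
    -- Fact 1 : decomposition
    have hYeq : restr X (pat none) = Y := by
      funext j
      simp [restr, pat, hY]
    have hAeq : ∀ j : Fin k, restr X (pat (some j)) = Function.update Y j (S1 j) := by
      intro j
      funext j'
      rcases eq_or_ne j' j with rfl | hj'
      · simp [restr, pat, hS1]
      · simp [restr, pat, hY, Function.update_of_ne hj', Ne.symm hj']
    have hdec : (Rect X ∩ D0 (n+1) k).ncard = A0 + ∑ j, A j := by
      rw [decomp X, Fintype.sum_option, hYeq]
      congr 1
      exact Finset.sum_congr rfl fun j _ => by rw [hAeq j]
    -- Fact 2 : modularity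
    have hmod : ∀ j, T j + B j = A0 + A j := by
      intro j
      have hcup : Rect (Function.update Y j (Y j ∪ S1 j)) ∩ D0 n k
          = (Rect (Function.update Y j (Y j)) ∩ D0 n k)
            ∪ (Rect (Function.update Y j (S1 j)) ∩ D0 n k) := by
        rw [rect_update_union, Set.union_inter_distrib_right]
      have hcap : Rect (Function.update Y j (Y j ∩ S1 j)) ∩ D0 n k
          = (Rect (Function.update Y j (Y j)) ∩ D0 n k)
            ∩ (Rect (Function.update Y j (S1 j)) ∩ D0 n k) := by
        rw [rect_update_inter]
        ext z
        simp only [Set.mem_inter_iff]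
        tauto
      rw [hT, hB]
      simp only
      rw [hcup, hcap,
        Set.ncard_union_add_ncard_inter _ _ (Set.toFinite _) (Set.toFinite _),
        Function.update_eq_self]
    -- Fact 3 : T j ≤ k ^ n
    have hTle : ∀ j, T j ≤ k ^ n := fun j => ih k hk _ (free_no_star h j)
    -- Fact 4 : A0 + ∑ B ≤ k * A0
    have hBle : A0 + ∑ j, B j ≤ k * A0 := by
      set C := Rect Y ∩ D0 n k with hC
      set W : Fin k → Set (Fin k → Fin n → Bool) :=
        fun j => Rect (Function.update Y j (Y j ∩ S1 j)) ∩ D0 n k with hW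
      have hWsub : ∀ j, W j ⊆ C := by
        intro j
        apply Set.inter_subset_inter_left
        apply rect_mono
        intro j'
        rcases eq_or_ne j' j with rfl | hj'
        · rw [Function.update_self]
          exact Set.inter_subset_left
        · rw [Function.update_of_ne hj']
      have hcomp : ∀ j, (C \ W j).ncard + B j = A0 :=
        fun j => Set.ncard_diff_add_ncard_of_subset (hWsub j) (Set.toFinite _)
      have hcov : C ⊆ ⋃ j ∈ (Finset.univ : Finset (Fin k)), (C \ W j) := by
        intro z hz
        by_contra hc
        simp only [Set.mem_iUnion, not_exists, Set.mem_diff, not_and, not_not] at hc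
        have hzS : z ∈ Rect S1 ∩ D0 n k := by
          refine ⟨fun j => ?_, hz.2⟩
          have h1 := hc j (Finset.mem_univ j) hz
          exact ((mem_rect_update.1 h1.1).1).2
        rw [ones_empty h] at hzS
        exact hzS
      have h1 : A0 ≤ ∑ j, (C \ W j).ncard :=
        le_trans (Set.ncard_le_ncard hcov (Set.toFinite _)) (ncard_biUnion_le _ _)
      have h2 : (∑ j, (C \ W j).ncard) + ∑ j, B j = k * A0 := by
        rw [← Finset.sum_add_distrib, Finset.sum_congr rfl (fun j _ => hcomp j),
          Finset.sum_const, Finset.card_univ, Fintype.card_fin, smul_eq_mul]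
      omega
    -- combine
    have hsum2 : (∑ j, T j) + ∑ j, B j = k * A0 + ∑ j, A j := by
      rw [← Finset.sum_add_distrib, Finset.sum_congr rfl (fun j _ => hmod j),
        Finset.sum_add_distrib, Finset.sum_const, Finset.card_univ, Fintype.card_fin,
        smul_eq_mul]
    have hsum3 : (∑ j, T j) ≤ k * k ^ n := by
      calc (∑ j, T j) ≤ ∑ _j : Fin k, k ^ n := Finset.sum_le_sum fun j _ => hTle j
        _ = k * k ^ n := by
          rw [Finset.sum_const, Finset.card_univ, Fintype.card_fin, smul_eq_mul]
    rw [hdec]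
    have hpow : k ^ (n+1) = k * k ^ n := by ring
    rw [hpow]
    obtain ⟨KA, hKA⟩ : ∃ m, k * A0 = m := ⟨_, rfl⟩
    obtain ⟨KK, hKK⟩ : ∃ m, k * k ^ n = m := ⟨_, rfl⟩
    rw [hKA] at hBle hsum2
    rw [hKK] at hsum3 ⊢
    omega

lemma aux_two_lt {k : ℕ} (hk : 2 ≤ k) : (2:ℝ) < (1 + 1/(k:ℝ)) ^ k := by
  have hK : (2:ℝ) ≤ (k:ℝ) := by exact_mod_cast hk
  have hK0 : (0:ℝ) < (k:ℝ) := by linarith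
  set u : ℝ := 1/(k:ℝ) with hu
  have hu0 : 0 < u := by positivity
  have hu2 : u ≤ 1/2 := by
    rw [hu, div_le_div_iff₀ hK0 (by norm_num)]
    linarith
  have hber : 1 + ((k-2 : ℕ):ℝ) * u ≤ (1 + u) ^ (k-2) :=
    one_add_mul_le_pow (by linarith) _
  have hcast : ((k-2:ℕ):ℝ) = (k:ℝ) - 2 := by
    push_cast [Nat.cast_sub hk]
    ring
  have hsplit : (1+u)^k = (1+u)^2 * (1+u)^(k-2) := by
    rw [← pow_add]
    congr 1
    omega
  have h1 : (1+u)^2 * (1 + ((k:ℝ)-2) * u) ≤ (1+u)^k := by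
    rw [hsplit]
    rw [hcast] at hber
    exact mul_le_mul_of_nonneg_left hber (by positivity)
  have hKu : (k:ℝ) * u = 1 := by rw [hu]; field_simp
  have hsub : ((k:ℝ)-2) * u = 1 - 2*u := by
    rw [sub_mul, hKu]
  calc (2:ℝ) < (1+u)^2 * (1 + (1 - 2*u)) := by nlinarith [hu0, hu2, sq_nonneg u, mul_pos hu0 hu0]
    _ = (1+u)^2 * (1 + ((k:ℝ)-2)*u) := by rw [hsub]
    _ ≤ (1+u)^k := h1

theorem large_rectangle_not_monochromatic' {n k : ℕ} (hk : 2 ≤ k) (hn : 1 ≤ n)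
    (X : Fin k → Set (Fin n → Bool))
    (h : Rect X ∩ Dstar n k = ∅) :
    (Set.ncard (Rect X ∩ D0 n k) : ℝ) < 2 ^ (-(n : ℝ) / k) * (k + 1) ^ n := by
  have hk1 : 1 ≤ k := by omega
  have hcard := key_bound n k hk1 X h
  have hcast : (Set.ncard (Rect X ∩ D0 n k) : ℝ) ≤ (k:ℝ) ^ n := by
    exact_mod_cast Nat.cast_le.2 hcard
  refine lt_of_le_of_lt hcast ?_
  have hK : (2:ℝ) ≤ (k:ℝ) := by exact_mod_cast hk
  have hK0 : (0:ℝ) < (k:ℝ) := by linarith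
  set c : ℝ := 2 ^ ((1:ℝ)/(k:ℝ)) with hc
  have hc0 : 0 < c := Real.rpow_pos_of_pos two_pos _
  have hck2 : c ^ k = 2 := by
    rw [hc, ← Real.rpow_natCast (2 ^ ((1:ℝ)/(k:ℝ))) k, ← Real.rpow_mul (by norm_num)]
    rw [one_div, inv_mul_cancel₀ (by positivity : (k:ℝ) ≠ 0), Real.rpow_one]
  have hck : c < 1 + 1/(k:ℝ) := by
    by_contra hle
    push_neg at hle
    have hb : (1 + 1/(k:ℝ))^k ≤ c^k := pow_le_pow_left₀ (by positivity) hle k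
    have := aux_two_lt hk
    rw [hck2] at hb
    linarith
  have hexp : (2:ℝ) ^ (-(n:ℝ)/(k:ℝ)) = (c ^ n)⁻¹ := by
    have he : -(n:ℝ)/(k:ℝ) = -((1/(k:ℝ))*(n:ℝ)) := by ring
    rw [he, Real.rpow_neg (by norm_num), Real.rpow_mul (by norm_num), Real.rpow_natCast]
  rw [hexp, inv_mul_eq_div, lt_div_iff₀ (by positivity)]
  rw [← mul_pow]
  apply pow_lt_pow_left₀ ?_ (by positivity) (by omega)
  calc (k:ℝ) * c < (k:ℝ) * (1 + 1/(k:ℝ)) := by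
        exact mul_lt_mul_of_pos_left hck hK0
    _ = (k:ℝ) + 1 := by field_simp


/-- Structure theorem: every rectangle disjoint from the 'yes' instances contains fewer
    than a 2^{-n/k} fraction of the (k+1)^n 'no' instances. Equivalently, any rectangle
    with |R ∩ D_0| ≥ 2^{-n/k}·|D_0| must intersect D_*. -/
theorem large_rectangle_not_monochromatic {n k : ℕ} (hk : 2 ≤ k) (hn : 1 ≤ n)
    (X : Fin k → Set (Fin n → Bool))
    (h : Rect X ∩ Dstar n k = ∅) :
    (Set.ncard (Rect X ∩ D0 n k) : ℝ) < 2 ^ (-(n : ℝ) / k) * (k + 1) ^ n :=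
  large_rectangle_not_monochromatic' hk hn X h
end

section
/- For any deterministic communication protocol C with at most c bits of communication for k-party unique disjointness on n coordinates that correctly outputs 0 on all inputs in D_0 and 1 on all inputs in D_*, we have c ≥ n/k. More precisely: if the input domain ({0,1}^n)^k is partitioned into at most 2^c rectangles, each entirely contained in D_0^complement-of-D_* classes (each rectangle is monochromatic: disjoint from D_0 or disjoint from D_*), then 2^c ≥ 2^{n/k}, i.e., c ≥ n/k. -/
/- ------------------ auxiliary lemmas ------------------ -/

private def findO {n : ℕ} (p : Fin n → Prop) [DecidablePred p] : Option (Fin n) :=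
  if h : ∃ k, p k then some (Fin.find p h) else none

private lemma findO_spec {n : ℕ} (p : Fin n → Prop) [DecidablePred p] {i : Fin n}
    (h : findO p = some i) : p i := by
  unfold findO at h
  split_ifs at h with hex
  cases h
  exact Fin.find_spec hex

private lemma isSome_findO_iff {n : ℕ} {p : Fin n → Prop} [DecidablePred p] :
    (findO p).isSome ↔ ∃ i, p i := by
  unfold findO
  split_ifs with hex <;> simp [hex]

private lemma two_le_sum_aux {k : ℕ} {p : Fin k → Prop} [DecidablePred p] {a b : Fin k}
    (hab : a ≠ b) (ha : p a) (hb : p b) :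
    2 ≤ ∑ j, if p j then 1 else 0 := by
  have h : (∑ j ∈ ({a, b} : Finset (Fin k)), if p j then 1 else 0) ≤
      ∑ j, if p j then 1 else 0 :=
    Finset.sum_le_sum_of_subset (Finset.subset_univ _)
  rwa [Finset.sum_pair hab, if_pos ha, if_pos hb] at h

private lemma unique_of_sum_le_one {k : ℕ} {p : Fin k → Prop} [DecidablePred p]
    (h : (∑ j, if p j then 1 else 0) ≤ 1) {a b : Fin k} (ha : p a) (hb : p b) : a = b := by
  by_contra hab
  exact absurd (le_trans (two_le_sum_aux hab ha hb) h) (by norm_num)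

private lemma sum_le_one_of_imp {k : ℕ} {p : Fin k → Prop} [DecidablePred p] {j₀ : Fin k}
    (h : ∀ m, p m → m = j₀) : (∑ j, if p j then 1 else 0) ≤ 1 := by
  calc (∑ j, if p j then 1 else 0) ≤ ∑ j, if j = j₀ then 1 else 0 := by
        apply Finset.sum_le_sum
        intro i _
        by_cases hp : p i
        · rw [if_pos hp, if_pos (h i hp)]
        · rw [if_neg hp]; exact Nat.zero_le _
    _ ≤ 1 := by
        rw [Finset.sum_ite_eq' Finset.univ j₀ (fun _ => (1 : ℕ))]
        simp

/-- Key structural lemma: a rectangle disjoint from `Dstar` contains at most `k^n`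
elements of `D0`. -/
private lemma rect_bound {k : ℕ} (hk : 0 < k) :
    ∀ (n : ℕ) (X : Fin k → Set (Fin n → Bool)),
      Rect X ∩ Dstar n k = ∅ → (Rect X ∩ D0 n k).ncard ≤ k ^ n := by
  intro n
  induction n with
  | zero =>
    intro X _
    rcases (Rect X ∩ D0 0 k).eq_empty_or_nonempty with h | ⟨a, ha⟩
    · simp [h]
    · have hsub : Rect X ∩ D0 0 k ⊆ {a} := by
        intro b _
        have : b = a := funext fun j => funext fun i => i.elim0
        simp [this]
      calc (Rect X ∩ D0 0 k).ncard ≤ ({a} : Set _).ncard :=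
            Set.ncard_le_ncard hsub (Set.finite_singleton a)
        _ = 1 := Set.ncard_singleton a
        _ ≤ k ^ 0 := by simp
  | succ n IH =>
    intro X hdis
    classical
    set S : Set (Fin k → Fin (n+1) → Bool) := Rect X ∩ D0 (n+1) k with hSdef
    -- prefixes of elements of D0 are in D0
    have hprefix : ∀ x : Fin k → Fin (n+1) → Bool, x ∈ D0 (n+1) k →
        (fun m => Fin.init (x m)) ∈ D0 n k := by
      intro x hx i
      have h := hx i.castSucc
      exact h
    -- the slice finsets
    let T : Option (Fin k) → Finset (Fin k → Fin n → Bool) := fun v =>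
      Finset.univ.filter (fun y => ∃ x, x ∈ S ∧ (∀ m, Fin.init (x m) = y m) ∧
        (∀ m, (x m (Fin.last n) = true ↔ v = some m)))
    have memT : ∀ (v : Option (Fin k)) (y : Fin k → Fin n → Bool),
        y ∈ T v ↔ ∃ x, x ∈ S ∧ (∀ m, Fin.init (x m) = y m) ∧
          (∀ m, (x m (Fin.last n) = true ↔ v = some m)) := by
      intro v y
      simp [T]
    -- (c1): no prefix lies in all T (some j)  (the mixing argument)
    have hmiss : ∀ y : Fin k → Fin n → Bool, ∃ j : Fin k, y ∉ T (some j) := by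
      intro y
      by_contra h
      push_neg at h
      choose x hxS hxinit hxlast using fun j => (memT (some j) y).mp (h j)
      -- the mixed input
      set w : Fin k → Fin (n+1) → Bool := fun m => x m m with hwdef
      have hwR : w ∈ Rect X := fun m => (hxS m).1 m
      have hyD0 : y ∈ D0 n k := by
        have h0 := hprefix (x ⟨0, hk⟩) (hxS ⟨0, hk⟩).2
        have : (fun m => Fin.init (x ⟨0, hk⟩ m)) = y := funext fun m => hxinit ⟨0, hk⟩ m
        rwa [this] at h0
      have hwD : w ∈ Dstar (n+1) k := by
        refine ⟨Fin.last n, fun m => ?_, ?_⟩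
        · exact (hxlast m m).mpr rfl
        · intro i hi
          revert hi
          refine Fin.lastCases ?_ ?_ i
          · intro hi'; exact absurd rfl hi'
          · intro i' _
            have hw : ∀ m, w m (Fin.castSucc i') = y m i' := by
              intro m
              have h2 := congrFun (hxinit m m) i'
              simpa [Fin.init] using h2
            calc (∑ j, if w j (Fin.castSucc i') then 1 else 0)
                = ∑ j, if y j i' then 1 else 0 := by
                  apply Finset.sum_congr rfl
                  intro j _
                  rw [hw j]
              _ ≤ 1 := hyD0 i'
      have : w ∈ Rect X ∩ Dstar (n+1) k := ⟨hwR, hwD⟩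
      rw [hdis] at this
      exact this
    -- (a): |S| ≤ ∑_v |T v|
    have hSfin : S.Finite := Set.toFinite S
    let SF : Finset (Fin k → Fin (n+1) → Bool) := hSfin.toFinset
    have memSF : ∀ x, x ∈ SF ↔ x ∈ S := fun x => Set.Finite.mem_toFinset hSfin
    let ψ : (Fin k → Fin (n+1) → Bool) → Option (Fin k) × (Fin k → Fin n → Bool) :=
      fun x => (findO (fun m => x m (Fin.last n) = true), fun m => Fin.init (x m))
    -- characterization of the first component
    have hfind : ∀ x, x ∈ S → ∀ m,
        (x m (Fin.last n) = true ↔ findO (fun m => x m (Fin.last n) = true) = some m) := by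
      intro x hx m
      constructor
      · intro hm
        have hsome : (findO (fun m => x m (Fin.last n) = true)).isSome :=
          isSome_findO_iff.mpr ⟨m, hm⟩
        obtain ⟨m', hm'⟩ := Option.isSome_iff_exists.mp hsome
        have pm' : x m' (Fin.last n) = true := findO_spec _ hm'
        have : m' = m := unique_of_sum_le_one (hx.2 (Fin.last n)) pm' hm
        rw [← this]; exact hm'
      · intro hv
        exact findO_spec _ hv
    have hψT : ∀ x, x ∈ S → (ψ x).2 ∈ T (ψ x).1 := by
      intro x hx
      refine (memT _ _).mpr ⟨x, hx, fun m => rfl, fun m => hfind x hx m⟩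
    have hinj : Set.InjOn ψ S := by
      intro x hx x' hx' heq
      have h1 : (ψ x).1 = (ψ x').1 := by rw [heq]
      have h2 : (ψ x).2 = (ψ x').2 := by rw [heq]
      funext m i
      refine Fin.lastCases ?_ ?_ i
      · have hx1 := hfind x hx m
        have hx2 := hfind x' hx' m
        simp only [ψ] at h1
        rw [h1] at hx1
        rw [Bool.eq_iff_iff]
        rw [hx1, hx2]
      · intro i'
        have := congrFun (congrFun h2 m) i'
        simpa [ψ, Fin.init] using this
    have hcard1 : S.ncard ≤ ∑ v : Option (Fin k), (T v).card := by
      have hSc : S.ncard = SF.card := Set.ncard_eq_toFinset_card S hSfin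
      have hinj' : Set.InjOn ψ ↑SF := by
        rw [Set.Finite.coe_toFinset]; exact hinj
      have himg : SF.image ψ ⊆
          Finset.univ.biUnion (fun v => (T v).image (fun y => (v, y))) := by
        intro p hp
        obtain ⟨x, hxSF, rfl⟩ := Finset.mem_image.mp hp
        have hxS : x ∈ S := (memSF x).mp hxSF
        refine Finset.mem_biUnion.mpr ⟨(ψ x).1, Finset.mem_univ _, ?_⟩
        exact Finset.mem_image.mpr ⟨(ψ x).2, hψT x hxS, rfl⟩
      calc S.ncard = SF.card := hSc
        _ = (SF.image ψ).card := (Finset.card_image_of_injOn hinj').symm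
        _ ≤ (Finset.univ.biUnion (fun v => (T v).image (fun y => (v, y)))).card :=
            Finset.card_le_card himg
        _ ≤ ∑ v, ((T v).image (fun y => (v, y))).card := Finset.card_biUnion_le
        _ ≤ ∑ v, (T v).card := Finset.sum_le_sum (fun v _ => Finset.card_image_le)
    -- (b): |T none ∪ T (some j)| ≤ k^n
    let W : Fin k → Fin k → Set (Fin n → Bool) := fun j m =>
      {y | ∃ x ∈ X m, (∀ i, Fin.init x i = y i) ∧ (x (Fin.last n) = true → m = j)}
    have hWdis : ∀ j, Rect (W j) ∩ Dstar n k = ∅ := by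
      intro j
      rw [Set.eq_empty_iff_forall_notMem]
      rintro w ⟨hwR, ℓ, hℓ1, hℓ2⟩
      choose ξ hξX hξinit hξlast using hwR
      have hmem : ξ ∈ Rect X ∩ Dstar (n+1) k := by
        refine ⟨fun m => hξX m, Fin.castSucc ℓ, fun m => ?_, ?_⟩
        · have h2 := congrFun (funext (hξinit m) : Fin.init (ξ m) = w m) ℓ
          simp only [Fin.init] at h2
          rw [h2]; exact hℓ1 m
        · intro i hi
          revert hi
          refine Fin.lastCases ?_ ?_ i
          · intro _
            exact sum_le_one_of_imp (fun m hm => hξlast m hm)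
          · intro i' hi'
            have hne : i' ≠ ℓ := by
              intro h; exact hi' (by rw [h])
            have hval : ∀ m, ξ m (Fin.castSucc i') = w m i' := by
              intro m
              have h2 := hξinit m i'
              simpa [Fin.init] using h2
            calc (∑ j', if ξ j' (Fin.castSucc i') then 1 else 0)
                = ∑ j', if w j' i' then 1 else 0 := by
                  apply Finset.sum_congr rfl
                  intro j' _
                  rw [hval j']
              _ ≤ 1 := hℓ2 i' hne
      rw [hdis] at hmem
      exact hmem
    have hTsub : ∀ j : Fin k,
        ((T none ∪ T (some j) : Finset _) : Set _) ⊆ Rect (W j) ∩ D0 n k := by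
      intro j y hy
      have hy' : y ∈ T none ∨ y ∈ T (some j) := by
        simpa [Finset.mem_union] using hy
      rcases hy' with hy' | hy'
      · obtain ⟨x, hxS, hinit, hlast⟩ := (memT none y).mp hy'
        constructor
        · intro m
          refine ⟨x m, hxS.1 m, fun i => by rw [hinit m], fun h => ?_⟩
          exact absurd ((hlast m).mp h) (by simp)
        · have h0 := hprefix x hxS.2
          have : (fun m => Fin.init (x m)) = y := funext fun m => hinit m
          rwa [this] at h0
      · obtain ⟨x, hxS, hinit, hlast⟩ := (memT (some j) y).mp hy'
        constructor
        · intro m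
          refine ⟨x m, hxS.1 m, fun i => by rw [hinit m], fun h => ?_⟩
          exact (Option.some_injective _ ((hlast m).mp h)).symm
        · have h0 := hprefix x hxS.2
          have : (fun m => Fin.init (x m)) = y := funext fun m => hinit m
          rwa [this] at h0
    have hb : ∀ j : Fin k, (T none ∪ T (some j)).card ≤ k ^ n := by
      intro j
      calc (T none ∪ T (some j)).card
          = ((T none ∪ T (some j) : Finset _) : Set _).ncard :=
            (Set.ncard_coe_finset _).symm
        _ ≤ (Rect (W j) ∩ D0 n k).ncard :=
            Set.ncard_le_ncard (hTsub j) (Set.toFinite _)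
        _ ≤ k ^ n := IH (W j) (hWdis j)
    -- (c): partition T none according to the least missing j
    let T' : Fin k → Finset (Fin k → Fin n → Bool) := fun j =>
      (T none).filter (fun y => findO (fun j' => y ∉ T (some j')) = some j)
    have hT'disj : ∀ j, Disjoint (T' j) (T (some j)) := by
      intro j
      rw [Finset.disjoint_left]
      intro y hy hyT
      have hmem := (Finset.mem_filter.mp hy).2
      exact (findO_spec (fun j' => y ∉ T (some j')) hmem) hyT
    have hT0eq : T none = Finset.univ.biUnion T' := by
      apply Finset.ext
      intro y
      constructor
      · intro hy
        have hsome : (findO (fun j' => y ∉ T (some j'))).isSome :=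
          isSome_findO_iff.mpr (hmiss y)
        obtain ⟨j, hj⟩ := Option.isSome_iff_exists.mp hsome
        exact Finset.mem_biUnion.mpr ⟨j, Finset.mem_univ _,
          Finset.mem_filter.mpr ⟨hy, hj⟩⟩
      · intro hy
        obtain ⟨j, _, hj⟩ := Finset.mem_biUnion.mp hy
        exact (Finset.mem_filter.mp hj).1
    have hT0card : (T none).card = ∑ j, (T' j).card := by
      rw [hT0eq]
      apply Finset.card_biUnion
      intro a _ b _ hab
      rw [Function.onFun, Finset.disjoint_left]
      intro y hya hyb
      have ha := (Finset.mem_filter.mp hya).2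
      have hb' := (Finset.mem_filter.mp hyb).2
      rw [ha] at hb'
      exact hab (Option.some_injective _ hb')
    -- (d): put it together
    have hfinal : S.ncard ≤ k ^ (n + 1) := by
      calc S.ncard ≤ ∑ v : Option (Fin k), (T v).card := hcard1
        _ = (T none).card + ∑ j, (T (some j)).card := Fintype.sum_option _
        _ = ∑ j, (T' j).card + ∑ j, (T (some j)).card := by rw [hT0card]
        _ = ∑ j, ((T' j).card + (T (some j)).card) := (Finset.sum_add_distrib).symm
        _ ≤ ∑ _j : Fin k, k ^ n := by
            apply Finset.sum_le_sum
            intro j _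
            calc (T' j).card + (T (some j)).card
                = (T' j ∪ T (some j)).card :=
                  (Finset.card_union_of_disjoint (hT'disj j)).symm
              _ ≤ (T none ∪ T (some j)).card := by
                  apply Finset.card_le_card
                  apply Finset.union_subset_union _ le_rfl
                  exact Finset.filter_subset _ _
              _ ≤ k ^ n := hb j
        _ = k * k ^ n := by
            rw [Finset.sum_const, Finset.card_univ, Fintype.card_fin, smul_eq_mul]
        _ = k ^ (n + 1) := by ring
    exact hfinal

/-- D0 has at least (k+1)^n elements. -/
private lemma D0_card {n k : ℕ} (hk : 0 < k) : (k + 1) ^ n ≤ (D0 n k).ncard := by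
  classical
  let φ : (Fin n → Option (Fin k)) → (Fin k → Fin n → Bool) :=
    fun f j i => decide (f i = some j)
  have hφinj : Function.Injective φ := by
    intro f g hfg
    funext i
    have hall : ∀ j, (f i = some j ↔ g i = some j) := by
      intro j
      have := congrFun (congrFun hfg j) i
      simp only [φ, decide_eq_decide] at this
      exact this
    cases hf : f i with
    | none =>
      cases hg : g i with
      | none => rfl
      | some j => exact absurd ((hall j).mpr hg) (by simp [hf])
    | some j =>
      rw [(hall j).mp hf]
  have hφD0 : Set.range φ ⊆ D0 n k := by
    rintro x ⟨f, rfl⟩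
    intro i
    cases hf : f i with
    | none =>
      apply sum_le_one_of_imp (j₀ := ⟨0, hk⟩)
      intro m hm
      simp only [φ, decide_eq_true_eq, hf] at hm
      cases hm
    | some j₀ =>
      apply sum_le_one_of_imp (j₀ := j₀)
      intro m hm
      simp only [φ, decide_eq_true_eq, hf, Option.some_inj] at hm
      exact hm.symm
  calc (k + 1) ^ n = Nat.card (Fin n → Option (Fin k)) := by
        simp [Nat.card_eq_fintype_card, Fintype.card_fun]
    _ = (Set.univ : Set (Fin n → Option (Fin k))).ncard := (Set.ncard_univ _).symm
    _ = (φ '' Set.univ).ncard := (Set.ncard_image_of_injective _ hφinj).symm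
    _ ≤ (D0 n k).ncard := by
        rw [Set.image_univ]
        exact Set.ncard_le_ncard hφD0 (Set.toFinite _)

/-- Deterministic lower bound: if the input domain is covered by at most 2^c rectangles,
    each monochromatic (disjoint from D_0 or from D_*), then c ≥ n/k. -/
theorem deterministic_lower_bound {n k c m : ℕ} (hk : 2 ≤ k) (hn : 1 ≤ n)
    (X : Fin m → Fin k → Set (Fin n → Bool))
    (hcover : ∀ x : Fin k → Fin n → Bool, ∃ t : Fin m, x ∈ Rect (X t))
    (hmono : ∀ t : Fin m, Rect (X t) ∩ D0 n k = ∅ ∨ Rect (X t) ∩ Dstar n k = ∅)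
    (hm : m ≤ 2 ^ c) :
    (n : ℝ) / k ≤ (c : ℝ) := by
  classical
  have hk0 : 0 < k := lt_of_lt_of_le two_pos hk
  -- covering bound
  have hcount : (D0 n k).ncard ≤ m * k ^ n := by
    let F : Fin m → Finset (Fin k → Fin n → Bool) :=
      fun t => (Set.toFinite (Rect (X t) ∩ D0 n k)).toFinset
    have hsub : (Set.toFinite (D0 n k)).toFinset ⊆ Finset.univ.biUnion F := by
      intro x hx
      have hx' : x ∈ D0 n k := (Set.Finite.mem_toFinset _).mp hx
      obtain ⟨t, ht⟩ := hcover x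
      exact Finset.mem_biUnion.mpr ⟨t, Finset.mem_univ _,
        (Set.Finite.mem_toFinset _).mpr ⟨ht, hx'⟩⟩
    calc (D0 n k).ncard = (Set.toFinite (D0 n k)).toFinset.card :=
          Set.ncard_eq_toFinset_card _ _
      _ ≤ (Finset.univ.biUnion F).card := Finset.card_le_card hsub
      _ ≤ ∑ t, (F t).card := Finset.card_biUnion_le
      _ ≤ ∑ _t : Fin m, k ^ n := by
          apply Finset.sum_le_sum
          intro t _
          rcases hmono t with h0 | hstar
          · have he : F t = ∅ := by
              simp only [F, Set.Finite.toFinset_eq_empty]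
              exact h0
            rw [he]
            simp
          · have : (F t).card = (Rect (X t) ∩ D0 n k).ncard :=
              (Set.ncard_eq_toFinset_card _ _).symm
            rw [this]
            exact rect_bound hk0 n (X t) hstar
      _ = m * k ^ n := by
          rw [Finset.sum_const, Finset.card_univ, Fintype.card_fin, smul_eq_mul]
  have key : (k + 1) ^ n ≤ 2 ^ c * k ^ n :=
    le_trans (le_trans (D0_card hk0) hcount) (Nat.mul_le_mul_right _ hm)
  -- pass to the reals
  have hkR : (0 : ℝ) < k := by exact_mod_cast hk0
  have h2 : (2 : ℝ) ≤ ((k + 1) / k) ^ k := by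
    have hb := one_add_mul_le_pow (a := 1 / (k : ℝ)) (le_trans (by norm_num : (-2:ℝ) ≤ 0) (by positivity)) k
    have hkk : (k : ℝ) * (1 / k) = 1 := by field_simp
    rw [hkk] at hb
    have : (1 : ℝ) + 1 / k = (k + 1) / k := by field_simp
    rw [this] at hb
    norm_num at hb
    exact_mod_cast hb
  have h1 : (((k : ℝ) + 1) / k) ^ n ≤ 2 ^ c := by
    rw [div_pow, div_le_iff₀ (by positivity)]
    exact_mod_cast key
  have h3 : (2 : ℝ) ^ n ≤ (2 : ℝ) ^ (c * k) := by
    calc (2 : ℝ) ^ n ≤ ((((k : ℝ) + 1) / k) ^ k) ^ n :=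
          pow_le_pow_left₀ (by norm_num) h2 n
      _ = ((((k : ℝ) + 1) / k) ^ n) ^ k := by
          rw [← pow_mul, ← pow_mul, mul_comm]
      _ ≤ ((2 : ℝ) ^ c) ^ k := pow_le_pow_left₀ (by positivity) h1 k
      _ = (2 : ℝ) ^ (c * k) := by rw [← pow_mul]
  have hnck : n ≤ c * k := by
    have h3' : (2 : ℕ) ^ n ≤ 2 ^ (c * k) := by exact_mod_cast h3
    exact (Nat.pow_le_pow_iff_right (by norm_num)).mp h3'
  rw [div_le_iff₀ hkR]
  exact_mod_cast hnck
end
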